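/- arXiv:2104.05734 — 2 statements merged into one kernel-verified Lean document; each statement's English description precedes it below -/
import Mathlib

section
/- Let σ₁,...,σ_K be density matrices that are affinely dependent, p a strictly positive probability distribution, and {Fₖ} a POVM with Tr(Fₖ σₖ) > 1/2 for all k. Then the guessing probability Σₖ pₖ Tr(Fₖ σₖ) is strictly less than 1 − p_min/2, where p_min = minₖ pₖ. -/
open Matrix
open scoped ComplexOrder

private lemma trace_mul_re_nonneg {n : ℕ} (A B : Matrix (Fin n) (Fin n) ℂ)
    (hA : A.PosSemidef) (hB : B.PosSemidef) : 0 ≤ ((A * B).trace).re := by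
  obtain ⟨C, rfl⟩ : ∃ C : Matrix (Fin n) (Fin n) ℂ, A = Cᴴ * C := by
    open scoped MatrixOrder in exact CStarAlgebra.nonneg_iff_eq_star_mul_self.mp hA.nonneg
  obtain ⟨D, rfl⟩ : ∃ D : Matrix (Fin n) (Fin n) ℂ, B = Dᴴ * D := by
    open scoped MatrixOrder in exact CStarAlgebra.nonneg_iff_eq_star_mul_self.mp hB.nonneg
  have key : (Cᴴ * C * (Dᴴ * D)).trace = ((C * Dᴴ)ᴴ * (C * Dᴴ)).trace := by
    rw [conjTranspose_mul, conjTranspose_conjTranspose]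
    rw [show Cᴴ * C * (Dᴴ * D) = (Cᴴ * C * Dᴴ) * D by
      simp [Matrix.mul_assoc]]
    rw [Matrix.trace_mul_comm]
    simp [Matrix.mul_assoc]
  rw [key]
  set M := C * Dᴴ with hM
  have : (Mᴴ * M).trace = ∑ i, ∑ j, star (M j i) * M j i := by
    simp [Matrix.trace, Matrix.diag, Matrix.mul_apply, Matrix.conjTranspose_apply]
  rw [this, Complex.re_sum]
  refine Finset.sum_nonneg fun i _ => ?_
  rw [Complex.re_sum]
  refine Finset.sum_nonneg fun j _ => ?_
  have : (star (M j i) * M j i).re = (M j i).re ^ 2 + (M j i).im ^ 2 := by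
    simp [Complex.mul_re, Complex.star_def]; ring
  rw [this]; positivity

/-- If the density matrices `σ k` are affinely dependent and
`Tr(F k σ k) > 1/2` for all `k`, then the guessing probability is strictly
below `1 − (min p)/2`. -/
theorem guess_lt_of_affine_dependent {n K : ℕ} (hK : 0 < K)
    (σ F : Fin K → Matrix (Fin n) (Fin n) ℂ)
    (hσ : ∀ k, (σ k).PosSemidef) (hσt : ∀ k, (σ k).trace = 1)
    (hdep : ¬ AffineIndependent ℝ σ)
    (hF : ∀ k, (F k).PosSemidef) (hFsum : ∑ k, F k = 1)
    (hbig : ∀ k, (1 : ℝ) / 2 < ((F k * σ k).trace).re)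
    (p : Fin K → ℝ) (hp : ∀ k, 0 < p k) (hps : ∑ k, p k = 1) :
    ∑ k, p k * ((F k * σ k).trace).re <
      1 - (Finset.univ.inf' (Finset.univ_nonempty_iff.mpr ⟨⟨0, hK⟩⟩) p) / 2 := by
  classical
  set g : Fin K → ℝ := fun k => ((F k * σ k).trace).re with hg
  set r : Fin K → Fin K → ℝ := fun k m => ((F k * σ m).trace).re with hr
  have hrnn : ∀ k m, 0 ≤ r k m := fun k m =>
    trace_mul_re_nonneg _ _ (hF k) (hσ m)
  -- extract an affine dependence
  rw [affineIndependent_iff] at hdep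
  push_neg at hdep
  obtain ⟨s, w, hw0, hwσ, i₀, hi₀s, hi₀⟩ := hdep
  set c : Fin K → ℝ := fun k => if k ∈ s then w k else 0 with hc
  have hc0 : ∑ k, c k = 0 := by
    rw [hc]; simp only [Finset.sum_ite_mem, Finset.univ_inter]; exact hw0
  have hcσ : ∑ k, c k • σ k = 0 := by
    rw [hc]
    rw [show (∑ k, (if k ∈ s then w k else 0) • σ k)
        = ∑ k, (if k ∈ s then w k • σ k else 0) by
      refine Finset.sum_congr rfl fun k _ => ?_; split <;> simp]
    simp only [Finset.sum_ite_mem, Finset.univ_inter]; exact hwσ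
  have hcne : c i₀ ≠ 0 := by rw [hc]; simpa [hi₀s] using hi₀
  -- choose the sign so that ∑ c' k * g k ≤ 0
  set c' : Fin K → ℝ := if (∑ k, c k * g k) ≤ 0 then c else -c with hc'
  have hc'0 : ∑ k, c' k = 0 := by
    rw [hc']; split
    · exact hc0
    · simp only [Pi.neg_apply, Finset.sum_neg_distrib, hc0, neg_zero]
  have hc'σ : ∑ k, c' k • σ k = 0 := by
    rw [hc']; split
    · exact hcσ
    · simp only [Pi.neg_apply, neg_smul, Finset.sum_neg_distrib, hcσ, neg_zero]
  have hc'g : ∑ k, c' k * g k ≤ 0 := by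
    rw [hc']; split
    · assumption
    · simp only [Pi.neg_apply, neg_mul, Finset.sum_neg_distrib]
      linarith [not_le.mp (by assumption : ¬ (∑ k, c k * g k) ≤ 0)]
  have hc'ne : c' i₀ ≠ 0 := by
    rw [hc']; split
    · exact hcne
    · simpa using hcne
  -- there is a positive entry
  have hpos : ∃ j, 0 < c' j := by
    by_contra h
    push_neg at h
    rcases lt_or_eq_of_le (h i₀) with hlt | heq
    · have : ∑ k, c' k < ∑ k, (0 : ℝ) :=
        Finset.sum_lt_sum (fun i _ => h i) ⟨i₀, Finset.mem_univ _, hlt⟩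
      simp [hc'0] at this
    · exact hc'ne heq
  set S : Finset (Fin K) := Finset.univ.filter (fun k => 0 < c' k) with hS
  have hSne : S.Nonempty := by
    obtain ⟨j, hj⟩ := hpos
    exact ⟨j, by simp [hS, hj]⟩
  obtain ⟨j, hjS, hjmin⟩ := S.exists_min_image (fun k => p k / c' k) hSne
  have hcj : 0 < c' j := by simpa [hS] using hjS
  set ε : ℝ := p j / c' j with hε
  have hε0 : 0 < ε := div_pos (hp j) hcj
  set q : Fin K → ℝ := fun k => p k - ε * c' k with hq
  have hq0 : ∀ k, 0 ≤ q k := by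
    intro k
    show 0 ≤ p k - ε * c' k
    by_cases hck : 0 < c' k
    · have hle := hjmin k (by simp [hS, hck])
      have h2 : ε * c' k ≤ p k := by
        calc ε * c' k ≤ (p k / c' k) * c' k := by nlinarith
          _ = p k := by field_simp
      linarith
    · push_neg at hck
      nlinarith [mul_nonpos_of_nonneg_of_nonpos hε0.le hck, hp k]
  have hqj : q j = 0 := by
    show p j - ε * c' j = 0
    rw [hε]
    field_simp
    ring
  -- trace expansions
  have hexp : ∀ k, ∑ m, c' m * r k m = 0 := by
    intro k
    have h1 : (F k * ∑ m, c' m • σ m).trace = 0 := by rw [hc'σ]; simp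
    have h2 : (F k * ∑ m, c' m • σ m).trace = ∑ m, c' m • (F k * σ m).trace := by
      rw [Finset.mul_sum]
      rw [show (∑ m, F k * c' m • σ m) = ∑ m, c' m • (F k * σ m) by
        refine Finset.sum_congr rfl fun m _ => ?_; rw [mul_smul_comm]]
      rw [Matrix.trace_sum]
      exact Finset.sum_congr rfl fun m _ => (Matrix.trace_smul _ _)
    have h3 : (0 : ℂ).re = (∑ m, c' m • (F k * σ m).trace).re := by
      rw [← h2, h1]
    rw [Complex.re_sum] at h3
    simp only [Complex.smul_re, smul_eq_mul] at h3
    exact h3.symm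
  have hBk : ∀ k, ∑ m, q m * r k m = ∑ m, p m * r k m := by
    intro k
    have : ∑ m, q m * r k m = ∑ m, p m * r k m - ε * ∑ m, c' m * r k m := by
      rw [Finset.mul_sum, ← Finset.sum_sub_distrib]
      refine Finset.sum_congr rfl fun m _ => ?_
      show (p m - ε * c' m) * r k m = p m * r k m - ε * (c' m * r k m)
      ring
    rw [this, hexp k]; ring
  -- total sum equals 1
  have htot : ∑ k, ∑ m, p m * r k m = 1 := by
    have h1 : ∑ k, (F k * ∑ m, p m • σ m).trace = (1 : ℂ) := by
      rw [← Matrix.trace_sum, ← Finset.sum_mul, hFsum, one_mul, Matrix.trace_sum]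
      have : ∀ m ∈ Finset.univ, (p m • σ m).trace = (p m : ℂ) := by
        intro m _
        rw [Matrix.trace_smul, hσt]
        simp [Complex.real_smul]
      rw [Finset.sum_congr rfl this]
      rw [show (∑ m, (p m : ℂ)) = ((∑ m, p m : ℝ) : ℂ) by push_cast; ring]
      rw [hps]; norm_num
    have h2 : ∀ k, ((F k * ∑ m, p m • σ m).trace).re = ∑ m, p m * r k m := by
      intro k
      have : (F k * ∑ m, p m • σ m).trace = ∑ m, p m • (F k * σ m).trace := by
        rw [Finset.mul_sum]
        rw [show (∑ m, F k * p m • σ m) = ∑ m, p m • (F k * σ m) by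
          refine Finset.sum_congr rfl fun m _ => ?_; rw [mul_smul_comm]]
        rw [Matrix.trace_sum]
        exact Finset.sum_congr rfl fun m _ => (Matrix.trace_smul _ _)
      rw [this, Complex.re_sum]
      simp only [Complex.smul_re, smul_eq_mul]
      rfl
    calc ∑ k, ∑ m, p m * r k m = ∑ k, ((F k * ∑ m, p m • σ m).trace).re :=
          Finset.sum_congr rfl fun k _ => (h2 k).symm
      _ = 1 := by rw [← Complex.re_sum, h1]; norm_num
  -- split off the j-th term
  have hsplit : (∑ m, p m * r j m) + ∑ k ∈ Finset.univ.erase j, ∑ m, p m * r k m = 1 := by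
    have := Finset.add_sum_erase Finset.univ (fun k => ∑ m, p m * r k m)
      (Finset.mem_univ j)
    rw [htot] at this
    exact this
  -- lower bound the j term
  have hjterm : p j / 2 < ∑ m, p m * r j m := by
    have h1 : p j * r j j ≤ ∑ m, p m * r j m :=
      Finset.single_le_sum (fun m _ => mul_nonneg (hp m).le (hrnn j m)) (Finset.mem_univ j)
    have h2 : p j / 2 < p j * r j j := by
      have := hbig j
      have hrg : r j j = g j := rfl
      nlinarith [hp j]
    linarith
  -- lower bound the other terms
  have hkterm : ∀ k ∈ Finset.univ.erase j, q k * g k ≤ ∑ m, p m * r k m := by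
    intro k _
    rw [← hBk k]
    have : q k * r k k ≤ ∑ m, q m * r k m :=
      Finset.single_le_sum (fun m _ => mul_nonneg (hq0 m) (hrnn k m)) (Finset.mem_univ k)
    exact this
  have hrest : ∑ k ∈ Finset.univ.erase j, q k * g k
      ≤ ∑ k ∈ Finset.univ.erase j, ∑ m, p m * r k m :=
    Finset.sum_le_sum hkterm
  have hqg : ∑ k ∈ Finset.univ.erase j, q k * g k = ∑ k, q k * g k := by
    have := Finset.add_sum_erase Finset.univ (fun k => q k * g k) (Finset.mem_univ j)
    simp only [hqj, zero_mul, zero_add] at this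
    exact this
  -- S(p) ≤ S(q)
  have hSpq : ∑ k, p k * g k ≤ ∑ k, q k * g k := by
    have : ∑ k, q k * g k = ∑ k, p k * g k - ε * ∑ k, c' k * g k := by
      rw [Finset.mul_sum, ← Finset.sum_sub_distrib]
      refine Finset.sum_congr rfl fun k _ => ?_
      show (p k - ε * c' k) * g k = p k * g k - ε * (c' k * g k)
      ring
    rw [this]
    nlinarith [hc'g, hε0]
  -- min ≤ p j
  have hmin : (Finset.univ.inf' (Finset.univ_nonempty_iff.mpr ⟨⟨0, hK⟩⟩) p) ≤ p j :=
    Finset.inf'_le _ (Finset.mem_univ j)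
  -- conclude
  have : p j / 2 + ∑ k, p k * g k < 1 := by
    calc p j / 2 + ∑ k, p k * g k
        ≤ p j / 2 + ∑ k, q k * g k := by linarith
      _ = p j / 2 + ∑ k ∈ Finset.univ.erase j, q k * g k := by rw [hqg]
      _ ≤ p j / 2 + ∑ k ∈ Finset.univ.erase j, ∑ m, p m * r k m := by linarith
      _ < (∑ m, p m * r j m) + ∑ k ∈ Finset.univ.erase j, ∑ m, p m * r k m := by linarith
      _ = 1 := hsplit
  have hgoal : ∑ k, p k * g k < 1 - p j / 2 := by linarith
  calc ∑ k, p k * ((F k * σ k).trace).re = ∑ k, p k * g k := rfl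
    _ < 1 - p j / 2 := hgoal
    _ ≤ 1 - (Finset.univ.inf' (Finset.univ_nonempty_iff.mpr ⟨⟨0, hK⟩⟩) p) / 2 := by linarith
end

section
/- (Operational signature of affine independence) Let σ₁,...,σ_K be density matrices and p a strictly positive probability distribution. If there exists a POVM {Fₖ} with guessing probability Σₖ pₖ Tr(Fₖ σₖ) > 1 − p_min/2 (where p_min = minₖ pₖ), then σ₁,...,σ_K are affinely independent. -/
open Matrix
open scoped ComplexOrder

lemma trace_nonneg_of_psd {m : ℕ} {M : Matrix (Fin m) (Fin m) ℂ}
    (hM : M.PosSemidef) : 0 ≤ M.trace := by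
  exact hM.trace_nonneg

lemma trace_mul_psd_re_nonneg {m : ℕ} {A B : Matrix (Fin m) (Fin m) ℂ}
    (hA : A.PosSemidef) (hB : B.PosSemidef) : 0 ≤ ((A * B).trace).re := by
  open scoped MatrixOrder in
  obtain ⟨S, hS⟩ := CStarAlgebra.nonneg_iff_eq_star_mul_self.mp hA.nonneg
  have h2 : (A * B).trace = (S * B * Sᴴ).trace := by
    rw [hS, star_eq_conjTranspose, mul_assoc, Matrix.trace_mul_comm Sᴴ]
  have hpsd : (S * B * Sᴴ).PosSemidef := hB.mul_mul_conjTranspose_same S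
  have := trace_nonneg_of_psd hpsd
  rw [h2]
  exact (Complex.nonneg_iff.mp this).1

/-- Operational signature of affine independence: if some POVM achieves guessing
probability exceeding `1 − (min p)/2`, the states `σ k` are affinely independent. -/
theorem affineIndependent_of_high_guess {n K : ℕ} (hK : 0 < K)
    (σ : Fin K → Matrix (Fin n) (Fin n) ℂ)
    (hσ : ∀ k, (σ k).PosSemidef) (hσt : ∀ k, (σ k).trace = 1)
    (p : Fin K → ℝ) (hp : ∀ k, 0 < p k) (hps : ∑ k, p k = 1)
    (F : Fin K → Matrix (Fin n) (Fin n) ℂ)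
    (hF : ∀ k, (F k).PosSemidef) (hFsum : ∑ k, F k = 1)
    (hguess : 1 - (Finset.univ.inf' (Finset.univ_nonempty_iff.mpr ⟨⟨0, hK⟩⟩) p) / 2 <
      ∑ k, p k * ((F k * σ k).trace).re) :
    AffineIndependent ℝ σ := by
  set pmin := Finset.univ.inf' (Finset.univ_nonempty_iff.mpr ⟨⟨0, hK⟩⟩) p with hpmin
  set t : Fin K → Fin K → ℝ := fun j k => ((F j * σ k).trace).re with ht
  -- nonnegativity of t
  have ht0 : ∀ j k, 0 ≤ t j k := fun j k => trace_mul_psd_re_nonneg (hF j) (hσ k)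
  -- column sums are 1
  have htsum : ∀ k, ∑ j, t j k = 1 := by
    intro k
    have h1 : ∑ j, (F j * σ k).trace = (σ k).trace := by
      rw [← Matrix.trace_sum, ← Finset.sum_mul, hFsum, one_mul]
    have := congrArg Complex.re h1
    rw [Complex.re_sum] at this
    rw [ht]
    simp only [this, hσt k, Complex.one_re]
  -- diagonal entries at most 1
  have htle1 : ∀ k, t k k ≤ 1 := by
    intro k
    rw [← htsum k]
    exact Finset.single_le_sum (fun j _ => ht0 j k) (Finset.mem_univ k)
  -- diagonal entries exceed 1/2
  have hdiag : ∀ k, 1/2 < t k k := by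
    by_contra hcon
    push_neg at hcon
    obtain ⟨b, hb⟩ := hcon
    have hle : ∑ k, p k * t k k ≤ 1 - p b / 2 := by
      have h1 : ∀ k, p k * t k k ≤ Function.update p b (p b / 2) k := by
        intro k
        by_cases hk : k = b
        · subst hk
          simp only [Function.update_self]
          nlinarith [hp k, ht0 k k]
        · simp only [Function.update_of_ne hk]
          nlinarith [hp k, htle1 k, ht0 k k]
      calc ∑ k, p k * t k k ≤ ∑ k, Function.update p b (p b / 2) k :=
            Finset.sum_le_sum (fun k _ => h1 k)
        _ = p b / 2 + ∑ k ∈ Finset.univ \ {b}, p k := by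
            rw [Finset.sum_update_of_mem (Finset.mem_univ b)]
        _ = p b / 2 + (1 - p b) := by
            rw [Finset.sum_sdiff_eq_sub (Finset.singleton_subset_iff.mpr (Finset.mem_univ b)),
              hps, Finset.sum_singleton]
        _ = 1 - p b / 2 := by ring
    have hminb : pmin ≤ p b := Finset.inf'_le p (Finset.mem_univ b)
    have : ∑ k, p k * t k k ≤ 1 - pmin / 2 := by linarith
    exact absurd hguess (not_lt.mpr this)
  -- affine independence
  rw [affineIndependent_iff]
  intro s w hw0 hwsum e he
  by_contra hwe
  set w' : Fin K → ℝ := fun k => if k ∈ s then w k else 0 with hw'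
  have hw'0 : ∑ k, w' k = 0 := by
    rw [hw']
    rw [Finset.sum_ite_mem, Finset.univ_inter, hw0]
  have hw'σ : ∑ k, w' k • σ k = 0 := by
    rw [← hwsum]
    simp only [hw', ite_smul, zero_smul, Finset.sum_ite_mem, Finset.univ_inter]
  -- for each j, the weighted row sum vanishes
  have hrow : ∀ j, ∑ k, w' k * t j k = 0 := by
    intro j
    have h1 : ∑ k, ((w' k : ℂ)) * (F j * σ k).trace = 0 := by
      have h2 : ∀ k, (w' k : ℂ) * (F j * σ k).trace = (F j * (w' k • σ k)).trace := by
        intro k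
        rw [mul_smul_comm, Matrix.trace_smul, Complex.real_smul]
      rw [Finset.sum_congr rfl (fun k _ => h2 k), ← Matrix.trace_sum, ← Finset.mul_sum,
        hw'σ, mul_zero, Matrix.trace_zero]
    have h3 := congrArg Complex.re h1
    rw [Complex.re_sum] at h3
    simp only [Complex.mul_re, Complex.ofReal_re, Complex.ofReal_im, zero_mul, sub_zero,
      Complex.zero_re] at h3
    exact h3
  -- key inequality per row
  have hkey : ∀ j, 2 * (|w' j| * t j j) ≤ ∑ k, |w' k| * t j k := by
    intro j
    have herase : ∑ k ∈ Finset.univ.erase j, w' k * t j k =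
        (∑ k, w' k * t j k) - w' j * t j j :=
      Finset.sum_erase_eq_sub (Finset.mem_univ j)
    have h1 : w' j * t j j = - ∑ k ∈ Finset.univ.erase j, w' k * t j k := by
      rw [herase, hrow j]; ring
    have h2 : |w' j| * t j j ≤ ∑ k ∈ Finset.univ.erase j, |w' k| * t j k := by
      calc |w' j| * t j j = |w' j * t j j| := by
            rw [abs_mul, abs_of_nonneg (ht0 j j)]
        _ = |∑ k ∈ Finset.univ.erase j, w' k * t j k| := by rw [h1, abs_neg]
        _ ≤ ∑ k ∈ Finset.univ.erase j, |w' k * t j k| :=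
            Finset.abs_sum_le_sum_abs _ _
        _ = ∑ k ∈ Finset.univ.erase j, |w' k| * t j k := by
            apply Finset.sum_congr rfl
            intro k _
            rw [abs_mul, abs_of_nonneg (ht0 j k)]
    have h3 : ∑ k ∈ Finset.univ.erase j, |w' k| * t j k =
        (∑ k, |w' k| * t j k) - |w' j| * t j j :=
      Finset.sum_erase_eq_sub (Finset.mem_univ j)
    linarith
  -- sum the key inequality over rows
  have hsum : 2 * ∑ j, |w' j| * t j j ≤ ∑ k, |w' k| := by
    calc 2 * ∑ j, |w' j| * t j j = ∑ j, 2 * (|w' j| * t j j) := by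
          rw [Finset.mul_sum]
      _ ≤ ∑ j, ∑ k, |w' k| * t j k := Finset.sum_le_sum (fun j _ => hkey j)
      _ = ∑ k, ∑ j, |w' k| * t j k := Finset.sum_comm
      _ = ∑ k, |w' k| := by
          apply Finset.sum_congr rfl
          intro k _
          rw [← Finset.mul_sum, htsum k, mul_one]
  -- strict inequality from the nonzero weight at e
  have hstrict : ∑ k, |w' k| < 2 * ∑ j, |w' j| * t j j := by
    rw [Finset.mul_sum]
    apply Finset.sum_lt_sum (fun k _ => by nlinarith [hdiag k, abs_nonneg (w' k)])
      ⟨e, Finset.mem_univ e, by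
        have hwe' : w' e ≠ 0 := by rw [hw']; simpa [he] using hwe
        have : 0 < |w' e| := abs_pos.mpr hwe'
        nlinarith [hdiag e]⟩
  linarith
end
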